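/- arXiv:1201.1969 — 2 statements merged into one kernel-verified Lean document; each statement's English description precedes it below -/
import Mathlib

section
/- Let s_1, …, s_m be nonzero elements of A, and let h be a nonzero weighted-homogeneous element of A lying in the ideal generated by the leading forms L(s_1), …, L(s_m). Then there exists an element s of the ideal generated by s_1, …, s_m whose leading form equals h; in particular the weighted total degree of s equals that of h. -/
open MvPolynomial

/-- The leading form of a polynomial `p` in the weighted-graded polynomial ring: its
weighted-homogeneous component of degree equal to its weighted total degree. -/
noncomputable def leadForm {k : Type*} [CommRing k] {σ : Type*} (w : σ → ℕ)
    (p : MvPolynomial σ k) : MvPolynomial σ k :=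
  weightedHomogeneousComponent w (weightedTotalDegree w p) p

lemma comp_mul_right_hom {k : Type*} [CommRing k] {σ : Type*} (w : σ → ℕ)
    {q : MvPolynomial σ k} {d : ℕ} (hq : q.IsWeightedHomogeneous w d)
    (a : MvPolynomial σ k) (n : ℕ) :
    weightedHomogeneousComponent w (n + d) (a * q) =
      weightedHomogeneousComponent w n a * q := by
  classical
  ext μ
  rw [coeff_weightedHomogeneousComponent, coeff_mul, coeff_mul]
  simp only [coeff_weightedHomogeneousComponent]
  split_ifs with hμ
  · apply Finset.sum_congr rfl
    intro x hx
    rw [Finset.HasAntidiagonal.mem_antidiagonal] at hx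
    by_cases hq2 : coeff x.2 q = 0
    · simp [hq2]
    · have hw2 : Finsupp.weight w x.2 = d := hq hq2
      have hadd : Finsupp.weight w x.1 + Finsupp.weight w x.2 = n + d := by
        rw [← map_add, hx, hμ]
      have : Finsupp.weight w x.1 = n := by omega
      rw [if_pos this]
  · symm
    apply Finset.sum_eq_zero
    intro x hx
    rw [Finset.HasAntidiagonal.mem_antidiagonal] at hx
    by_cases hq2 : coeff x.2 q = 0
    · simp [hq2]
    · have hw2 : Finsupp.weight w x.2 = d := hq hq2
      have hadd : Finsupp.weight w x.1 + Finsupp.weight w x.2 = Finsupp.weight w μ := by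
        rw [← map_add, hx]
      rw [if_neg (by omega), zero_mul]

lemma comp_mul_right_hom_zero {k : Type*} [CommRing k] {σ : Type*} (w : σ → ℕ)
    {q : MvPolynomial σ k} {d : ℕ} (hq : q.IsWeightedHomogeneous w d)
    (a : MvPolynomial σ k) {n : ℕ} (hn : n < d) :
    weightedHomogeneousComponent w n (a * q) = 0 := by
  classical
  ext μ
  rw [coeff_weightedHomogeneousComponent, coeff_zero]
  split_ifs with hμ
  · rw [coeff_mul]
    apply Finset.sum_eq_zero
    intro x hx
    rw [Finset.HasAntidiagonal.mem_antidiagonal] at hx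
    by_cases hq2 : coeff x.2 q = 0
    · simp [hq2]
    · have hw2 : Finsupp.weight w x.2 = d := hq hq2
      have hadd : Finsupp.weight w x.1 + Finsupp.weight w x.2 = n := by
        rw [← map_add, hx, hμ]
      omega
  · rfl

/-- if `s_1, …, s_m` are nonzero and `h` is a nonzero weighted-homogeneous
element of the ideal generated by the leading forms `L(s_1), …, L(s_m)`, then the ideal
`(s_1, …, s_m)` contains an element `s` with leading form exactly `h`; in particular the
weighted total degree of `s` equals that of `h`. -/
theorem stmt7 {k : Type*} [CommRing k] {σ : Type*} [Fintype σ] (w : σ → ℕ)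
    (hw : ∀ x, 1 ≤ w x) (m : ℕ) (s : Fin m → MvPolynomial σ k) (hs : ∀ i, s i ≠ 0)
    (h : MvPolynomial σ k) (hh : h ≠ 0) (dh : ℕ) (hhom : h.IsWeightedHomogeneous w dh)
    (hmem : h ∈ Ideal.span (Set.range fun i => leadForm w (s i))) :
    ∃ s' ∈ Ideal.span (Set.range s),
      leadForm w s' = h ∧ weightedTotalDegree w s' = weightedTotalDegree w h := by
  classical
  set D : Fin m → ℕ := fun i => weightedTotalDegree w (s i) with hD
  have hLhom : ∀ i, (leadForm w (s i)).IsWeightedHomogeneous w (D i) := fun i =>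
    weightedHomogeneousComponent_isWeightedHomogeneous _ _
  obtain ⟨a, ha⟩ := (Submodule.mem_span_range_iff_exists_fun _).mp hmem
  simp only [smul_eq_mul] at ha
  set b : Fin m → MvPolynomial σ k := fun i =>
    if D i ≤ dh then weightedHomogeneousComponent w (dh - D i) (a i) else 0 with hb
  set s' : MvPolynomial σ k := ∑ i, b i * s i with hs'
  have hmem' : s' ∈ Ideal.span (Set.range s) :=
    Ideal.sum_mem _ fun i _ => Ideal.mul_mem_left _ _ (Ideal.subset_span ⟨i, rfl⟩)
  -- the dh-component of s' is h
  have hcomp : ∀ i, weightedHomogeneousComponent w dh (b i * s i) =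
      weightedHomogeneousComponent w dh (a i * leadForm w (s i)) := by
    intro i
    by_cases hDi : D i ≤ dh
    · have hbi : (b i).IsWeightedHomogeneous w (dh - D i) := by
        rw [hb]; simp only [if_pos hDi]
        exact weightedHomogeneousComponent_isWeightedHomogeneous _ _
      have e1 : weightedHomogeneousComponent w dh (b i * s i)
          = weightedHomogeneousComponent w (D i) (s i) * b i := by
        have key := comp_mul_right_hom w hbi (s i) (D i)
        rw [Nat.add_sub_cancel' hDi] at key
        rw [mul_comm (b i) (s i)]
        exact key
      have e2 : weightedHomogeneousComponent w dh (a i * leadForm w (s i))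
          = weightedHomogeneousComponent w (dh - D i) (a i) * leadForm w (s i) := by
        have key := comp_mul_right_hom w (hLhom i) (a i) (dh - D i)
        rw [Nat.sub_add_cancel hDi] at key
        exact key
      rw [e1, e2, hb]
      simp only [if_pos hDi]
      rw [mul_comm]
      rfl
    · have hbi : b i = 0 := by rw [hb]; simp [hDi]
      rw [hbi, zero_mul, map_zero,
        comp_mul_right_hom_zero w (hLhom i) (a i) (by omega : dh < D i)]
  have hcompsum : weightedHomogeneousComponent w dh s' = h := by
    rw [hs', map_sum]
    calc ∑ i, weightedHomogeneousComponent w dh (b i * s i)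
        = ∑ i, weightedHomogeneousComponent w dh (a i * leadForm w (s i)) :=
          Finset.sum_congr rfl fun i _ => hcomp i
      _ = weightedHomogeneousComponent w dh (∑ i, a i * leadForm w (s i)) := (map_sum _ _ _).symm
      _ = weightedHomogeneousComponent w dh h := by rw [ha]
      _ = h := IsWeightedHomogeneous.weightedHomogeneousComponent_same hhom
  -- degree bound
  have hdegle : weightedTotalDegree w s' ≤ dh := by
    apply Finset.sup_le
    intro μ hμ
    rw [mem_support_iff, hs', coeff_sum] at hμ
    obtain ⟨i, -, hi⟩ := Finset.exists_ne_zero_of_sum_ne_zero hμ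
    rw [coeff_mul] at hi
    obtain ⟨x, hxmem, hx⟩ := Finset.exists_ne_zero_of_sum_ne_zero hi
    rw [Finset.HasAntidiagonal.mem_antidiagonal] at hxmem
    have hx1 : coeff x.1 (b i) ≠ 0 := fun h0 => hx (by rw [h0, zero_mul])
    have hx2 : coeff x.2 (s i) ≠ 0 := fun h0 => hx (by rw [h0, mul_zero])
    have hDi : D i ≤ dh := by
      by_contra hc
      apply hx1
      rw [hb]; simp [hc]
    have hw1 : Finsupp.weight w x.1 = dh - D i := by
      have hbi : (b i).IsWeightedHomogeneous w (dh - D i) := by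
        rw [hb]; simp only [if_pos hDi]
        exact weightedHomogeneousComponent_isWeightedHomogeneous _ _
      exact hbi hx1
    have hw2 : Finsupp.weight w x.2 ≤ D i :=
      le_weightedTotalDegree w (mem_support_iff.mpr hx2)
    have : Finsupp.weight w μ = Finsupp.weight w x.1 + Finsupp.weight w x.2 := by
      rw [← map_add, hxmem]
    omega
  have hdeg : weightedTotalDegree w s' = dh := by
    refine le_antisymm hdegle (not_lt.mp fun hlt => hh ?_)
    rw [← hcompsum, weightedHomogeneousComponent_eq_zero _ _ hlt]
  have hdegh : weightedTotalDegree w h = dh := by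
    have h1 := hhom.weighted_total_degree hh
    have h2 := weightedTotalDegree_coe w h hh
    rw [h2] at h1
    exact_mod_cast h1
  exact ⟨s', hmem', by rw [leadForm, hdeg, hcompsum], by rw [hdeg, hdegh]⟩
end

section
/- Let s_1, …, s_m be nonzero elements of A. If the quotient ring A/(L(s_1), …, L(s_m)) by the ideal generated by the leading forms is a finite-dimensional k-vector space, then the quotient ring A/(s_1, …, s_m) by the ideal generated by the s_i themselves is also a finite-dimensional k-vector space. -/
open MvPolynomial

open Finsupp

section helpers

variable {k : Type*} [CommRing k] {σ : Type*}

lemma comp_mul (w : σ → ℕ) (c g : MvPolynomial σ k) {e : ℕ}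
    (hg : g.IsWeightedHomogeneous w e) (n : ℕ) :
    weightedHomogeneousComponent w n (c * g) =
      if e ≤ n then weightedHomogeneousComponent w (n - e) c * g else 0 := by
  classical
  have hfin := weightedHomogeneousComponent_finsupp (w := w) (φ := c)
  have hc : ∑ i ∈ hfin.toFinset, weightedHomogeneousComponent w i c = c := by
    rw [← finsum_eq_sum _ hfin]; exact sum_weightedHomogeneousComponent w c
  have step1 : weightedHomogeneousComponent w n (c * g) =
      ∑ i ∈ hfin.toFinset, if n = i + e then weightedHomogeneousComponent w i c * g else 0 := by
    conv_lhs => rw [← hc, Finset.sum_mul, map_sum]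
    refine Finset.sum_congr rfl fun i _ => ?_
    exact weightedHomogeneousComponent_of_mem
      (((weightedHomogeneousComponent_isWeightedHomogeneous i c).mul hg))
  rw [step1]
  by_cases h : e ≤ n
  · rw [if_pos h]
    have heq : ∀ i, (n = i + e) = (i = n - e) := fun i => by
      apply propext; omega
    simp_rw [heq]
    rw [Finset.sum_ite_eq' hfin.toFinset (n - e) (fun i => weightedHomogeneousComponent w i c * g)]
    by_cases hmem : n - e ∈ hfin.toFinset
    · rw [if_pos hmem]
    · rw [if_neg hmem]
      have : weightedHomogeneousComponent w (n - e) c = 0 := by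
        by_contra hne; exact hmem ((Set.Finite.mem_toFinset hfin).mpr hne)
      rw [this, zero_mul]
  · rw [if_neg h]
    apply Finset.sum_eq_zero
    intro i _
    rw [if_neg (by omega)]

lemma Xpow_hom (w : σ → ℕ) (x : σ) (n : ℕ) :
    (X x ^ n : MvPolynomial σ k).IsWeightedHomogeneous w (n * w x) := by
  rw [X_pow_eq_monomial]
  apply isWeightedHomogeneous_monomial
  rw [weight_apply, Finsupp.sum_single_index] <;> simp [mul_comm]

lemma key_comp (w : σ → ℕ) (hw : ∀ x, 1 ≤ w x) (x : σ) (f : Polynomial k) (hf : f.Monic) :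
    weightedHomogeneousComponent w (f.natDegree * w x) (Polynomial.aeval (X x) f)
      = (X x : MvPolynomial σ k) ^ f.natDegree := by
  classical
  rw [Polynomial.aeval_eq_sum_range, map_sum]
  have step : ∀ i, weightedHomogeneousComponent w (f.natDegree * w x)
      (f.coeff i • (X x : MvPolynomial σ k) ^ i) =
      if i = f.natDegree then f.coeff i • (X x : MvPolynomial σ k) ^ i else 0 := by
    intro i
    rw [map_smul, weightedHomogeneousComponent_of_mem
      ((mem_weightedHomogeneousSubmodule k w _ _).mpr (Xpow_hom w x i))]
    by_cases hi : i = f.natDegree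
    · subst hi; rw [if_pos rfl, if_pos rfl]
    · rw [if_neg, if_neg hi, smul_zero]
      intro hcontra
      exact hi (Nat.eq_of_mul_eq_mul_right (hw x) hcontra).symm
  simp_rw [step]
  rw [Finset.sum_ite_eq' (Finset.range (f.natDegree + 1)) f.natDegree]
  rw [if_pos (Finset.self_mem_range_succ _), hf.coeff_natDegree, one_smul]

lemma coeff_eq_zero_of_wdeg_lt (w : σ → ℕ) {p : MvPolynomial σ k} {μ : σ →₀ ℕ}
    (h : weightedTotalDegree w p < weight w μ) : MvPolynomial.coeff μ p = 0 := by
  by_contra hc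
  exact absurd (le_weightedTotalDegree w (MvPolynomial.mem_support_iff.mpr hc)) (not_le.mpr h)

lemma wdeg_lt_of_forall (w : σ → ℕ) {p : MvPolynomial σ k} {d : ℕ} (hd : 0 < d)
    (h : ∀ μ ∈ p.support, weight w μ < d) : weightedTotalDegree w p < d :=
  Finset.sup_lt_iff (by simpa using hd) |>.mpr h

end helpers

/-- if `s_1, …, s_m` are nonzero and `A/(L(s_1), …, L(s_m))` is a
finite-dimensional `k`-vector space, then so is `A/(s_1, …, s_m)`. -/
theorem stmt8 {k : Type*} [Field k] {σ : Type*} [Fintype σ] (w : σ → ℕ)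
    (hw : ∀ x, 1 ≤ w x) (m : ℕ) (s : Fin m → MvPolynomial σ k) (hs : ∀ i, s i ≠ 0)
    (hfin : FiniteDimensional k
      (MvPolynomial σ k ⧸ Ideal.span (Set.range fun i => leadForm w (s i)))) :
    FiniteDimensional k (MvPolynomial σ k ⧸ Ideal.span (Set.range s)) := by
  classical
  set I : Ideal (MvPolynomial σ k) :=
    Ideal.span (Set.range fun i => leadForm w (s i)) with hI
  set J : Ideal (MvPolynomial σ k) := Ideal.span (Set.range s) with hJ
  have hLhom : ∀ i, (leadForm w (s i)).IsWeightedHomogeneous w (weightedTotalDegree w (s i)) :=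
    fun i => weightedHomogeneousComponent_isWeightedHomogeneous _ _
  -- components of members of I are in I
  have hIcomp : ∀ p ∈ I, ∀ n, weightedHomogeneousComponent w n p ∈ I := by
    intro p hp n
    obtain ⟨c, hc⟩ := Ideal.mem_span_range_iff_exists_fun.mp hp
    rw [← hc, map_sum]
    apply Ideal.sum_mem
    intro i _
    rw [comp_mul w (c i) (leadForm w (s i)) (hLhom i) n]
    split_ifs
    · exact Ideal.mul_mem_left _ _ (Ideal.subset_span ⟨i, rfl⟩)
    · exact I.zero_mem
  -- powers of variables lie in I
  have hXpow : ∀ x : σ, ∃ N : ℕ, (X x : MvPolynomial σ k) ^ N ∈ I := by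
    intro x
    haveI : Algebra.IsIntegral k (MvPolynomial σ k ⧸ I) := Algebra.IsIntegral.of_finite k _
    obtain ⟨f, hfm, hfz⟩ := Algebra.IsIntegral.isIntegral (R := k) (Ideal.Quotient.mk I (X x))
    have hg : (Polynomial.aeval (X x : MvPolynomial σ k)) f ∈ I := by
      rw [← Ideal.Quotient.eq_zero_iff_mem]
      have h1 := Polynomial.aeval_algHom_apply (Ideal.Quotient.mkₐ k I) (X x : MvPolynomial σ k) f
      rw [Ideal.Quotient.mkₐ_eq_mk] at h1
      rw [← h1, Polynomial.aeval_def]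
      exact hfz
    exact ⟨f.natDegree, key_comp w hw x f hfm ▸ hIcomp _ hg _⟩
  choose N hN using hXpow
  set D : ℕ := 1 + ∑ x, N x * w x with hD
  -- monomials of weight ≥ D are in I
  have hmon : ∀ μ : σ →₀ ℕ, D ≤ weight w μ → ∀ r : k, monomial μ r ∈ I := by
    intro μ hμ r
    have hx : ∃ x, N x ≤ μ x := by
      by_contra h
      push_neg at h
      have h1 : weight w μ = ∑ x : σ, μ x * w x := by
        rw [weight_apply, Finsupp.sum_fintype]
        · simp [smul_eq_mul]
        · intro i; simp
      have h2 : ∑ x : σ, μ x * w x ≤ ∑ x, N x * w x :=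
        Finset.sum_le_sum fun x _ => Nat.mul_le_mul_right _ (le_of_lt (h x))
      omega
    obtain ⟨x, hx⟩ := hx
    have hsplit : (μ - Finsupp.single x (N x)) + Finsupp.single x (N x) = μ :=
      tsub_add_cancel_of_le (Finsupp.single_le_iff.mpr hx)
    have heq : monomial μ r = monomial (μ - Finsupp.single x (N x)) r * (X x ^ (N x)) := by
      rw [X_pow_eq_monomial, monomial_mul, mul_one, hsplit]
    rw [heq]
    exact Ideal.mul_mem_left _ _ (hN x)
  -- lead forms of polynomials of high degree lie in I
  have hLpI : ∀ p : MvPolynomial σ k, D ≤ weightedTotalDegree w p → leadForm w p ∈ I := by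
    intro p hp
    rw [← support_sum_monomial_coeff (leadForm w p)]
    apply Ideal.sum_mem
    intro μ hμ
    rw [MvPolynomial.mem_support_iff] at hμ
    have hcw : weight w μ = weightedTotalDegree w p := by
      by_contra hne
      apply hμ
      unfold leadForm
      rw [coeff_weightedHomogeneousComponent, if_neg hne]
    exact hmon μ (hcw ▸ hp) _
  have hD1 : 1 ≤ D := by omega
  -- total degree is at most weighted total degree
  have htd : ∀ p : MvPolynomial σ k, p.totalDegree ≤ weightedTotalDegree w p := by
    intro p
    apply Finset.sup_le
    intro μ hμ
    refine le_trans ?_ (le_weightedTotalDegree w hμ)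
    rw [weight_apply, Finsupp.sum]
    apply Finset.sum_le_sum
    intro i _
    exact Nat.le_mul_of_pos_right _ (hw i)
  -- descent
  have descent : ∀ d : ℕ, ∀ p : MvPolynomial σ k, weightedTotalDegree w p ≤ d →
      ∃ q : MvPolynomial σ k, q.totalDegree ≤ D ∧ q - p ∈ J := by
    intro d
    induction d using Nat.strong_induction_on with
    | _ d IH =>
      intro p hp
      by_cases hlow : weightedTotalDegree w p < D
      · exact ⟨p, le_trans (htd p) (le_of_lt hlow), by simp⟩
      push_neg at hlow
      set e := weightedTotalDegree w p with he
      have he1 : 1 ≤ e := le_trans hD1 hlow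
      obtain ⟨c, hc⟩ := Ideal.mem_span_range_iff_exists_fun.mp (hLpI p hlow)
      set q : Fin m → MvPolynomial σ k := fun i =>
        if weightedTotalDegree w (s i) ≤ e then
          weightedHomogeneousComponent w (e - weightedTotalDegree w (s i)) (c i) else 0 with hq
      set r := ∑ i, q i * s i with hr
      have hrJ : r ∈ J :=
        Ideal.sum_mem _ fun i _ => Ideal.mul_mem_left _ _ (Ideal.subset_span ⟨i, rfl⟩)
      -- the identity ∑ q i * leadForm (s i) = leadForm p
      have hid : ∑ i, q i * leadForm w (s i) = leadForm w p := by
        have h1 := congrArg (weightedHomogeneousComponent w e) hc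
        rw [map_sum] at h1
        have h2 : weightedHomogeneousComponent w e (leadForm w p) = leadForm w p := by
          have h3 : (leadForm w p).IsWeightedHomogeneous w e := by
            unfold leadForm
            rw [he]
            exact weightedHomogeneousComponent_isWeightedHomogeneous _ _
          exact h3.weightedHomogeneousComponent_same
        rw [h2] at h1
        rw [← h1]
        refine Finset.sum_congr rfl fun i _ => ?_
        rw [comp_mul w (c i) (leadForm w (s i)) (hLhom i) e]
        simp only [hq]
        split_ifs <;> simp
      -- rewrite p - r
      have halg : p - r = (p - leadForm w p) - ∑ i, q i * (s i - leadForm w (s i)) := by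
        have h4 : ∑ i, q i * (s i - leadForm w (s i)) = r - leadForm w p := by
          rw [hr, ← hid, ← Finset.sum_sub_distrib]
          exact Finset.sum_congr rfl fun i _ => by ring
        rw [h4]; ring
      -- degree bound on the correction terms
      have hterm : ∀ i, weightedTotalDegree w (q i * (s i - leadForm w (s i))) < e := by
        intro i
        by_cases hqz : q i = 0
        · rw [hqz, zero_mul]
          have : weightedTotalDegree w (0 : MvPolynomial σ k) = ⊥ := weightedTotalDegree_zero w
          rw [this]
          exact lt_of_lt_of_le Nat.one_pos he1
        have hdi : weightedTotalDegree w (s i) ≤ e := by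
          by_contra hcon
          exact hqz (by rw [hq]; simp only [if_neg hcon])
        have hqdef : q i = weightedHomogeneousComponent w (e - weightedTotalDegree w (s i)) (c i) := by
          rw [hq]; simp only [if_pos hdi]
        apply wdeg_lt_of_forall w (lt_of_lt_of_le Nat.one_pos he1)
        intro ν hν
        have hν2 := MvPolynomial.support_mul _ _ hν
        rw [Finset.mem_add] at hν2
        obtain ⟨α, hα, β, hβ, rfl⟩ := hν2
        have hwα : weight w α = e - weightedTotalDegree w (s i) := by
          have := weightedHomogeneousComponent_isWeightedHomogeneous
            (w := w) (e - weightedTotalDegree w (s i)) (c i)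
          rw [← hqdef] at this
          exact this (MvPolynomial.mem_support_iff.mp hα)
        have hwβ : weight w β < weightedTotalDegree w (s i) := by
          have hβne := MvPolynomial.mem_support_iff.mp hβ
          rcases lt_trichotomy (weight w β) (weightedTotalDegree w (s i)) with h | h | h
          · exact h
          · exfalso; apply hβne
            rw [MvPolynomial.coeff_sub]
            unfold leadForm
            rw [coeff_weightedHomogeneousComponent, if_pos h, sub_self]
          · exfalso; apply hβne
            rw [MvPolynomial.coeff_sub]
            unfold leadForm
            rw [coeff_weightedHomogeneousComponent, if_neg (ne_of_gt h),
              coeff_eq_zero_of_wdeg_lt w h, sub_zero]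
        rw [map_add, hwα]
        omega
      -- coefficients of p - r vanish in weight ≥ e
      have hwlt : weightedTotalDegree w (p - r) < e := by
        apply wdeg_lt_of_forall w (lt_of_lt_of_le Nat.one_pos he1)
        intro μ hμ
        by_contra hcon
        push_neg at hcon
        apply MvPolynomial.mem_support_iff.mp hμ
        have hcsum : MvPolynomial.coeff μ (∑ i, q i * (s i - leadForm w (s i))) = 0 := by
          rw [MvPolynomial.coeff_sum]
          apply Finset.sum_eq_zero
          intro i _
          exact coeff_eq_zero_of_wdeg_lt w (lt_of_lt_of_le (hterm i) hcon)
        have hcLp : MvPolynomial.coeff μ (p - leadForm w p) = 0 := by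
          rw [MvPolynomial.coeff_sub]
          rcases eq_or_lt_of_le hcon with h | h
          · rw [show MvPolynomial.coeff μ (leadForm w p) = MvPolynomial.coeff μ p from by
              unfold leadForm
              rw [coeff_weightedHomogeneousComponent, if_pos (by rw [← he]; exact h.symm)],
              sub_self]
          · rw [show MvPolynomial.coeff μ (leadForm w p) = 0 from by
              unfold leadForm
              rw [coeff_weightedHomogeneousComponent, if_neg (by rw [← he]; omega)],
              sub_zero]
            exact coeff_eq_zero_of_wdeg_lt w (lt_of_le_of_lt (le_of_eq he.symm) h)
        rw [halg, MvPolynomial.coeff_sub, hcsum, hcLp, sub_zero]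
      -- apply the induction hypothesis
      have hed : e ≤ d := he ▸ hp
      obtain ⟨q₀, hq1, hq2⟩ := IH (e - 1) (by omega) (p - r) (by omega)
      refine ⟨q₀, hq1, ?_⟩
      have : q₀ - p = (q₀ - (p - r)) - r := by ring
      rw [this]
      exact J.sub_mem hq2 hrJ
  -- conclude
  have hsurj : Function.Surjective
      ((Ideal.Quotient.mkₐ k J).toLinearMap ∘ₗ (restrictTotalDegree σ k D).subtype) := by
    intro z
    obtain ⟨p, rfl⟩ := Ideal.Quotient.mk_surjective z
    obtain ⟨qq, hq1, hq2⟩ := descent (weightedTotalDegree w p) p le_rfl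
    refine ⟨⟨qq, ?_⟩, ?_⟩
    · rw [mem_restrictTotalDegree]; exact hq1
    · simpa [Ideal.Quotient.mkₐ_eq_mk] using (Ideal.Quotient.eq (I := J)).mpr hq2
  exact Module.Finite.of_surjective _ hsurj
end
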